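/- Let H be the integer Heisenberg group, let { q_i : i ≥ 1 } be an infinite sequence of distinct primes, and for ℓ ≥ 1 set M_ℓ = q₁q₂⋯q_ℓ and N_ℓ = q₁²q₂²⋯q_ℓ². Let H_ℓ = { (aM_ℓ, bN_ℓ, cN_ℓ) : a, b, c ∈ ℤ } ⊂ H. Then each H_ℓ is a finite-index subgroup of H with H_{ℓ+1} ⊂ H_ℓ and ⋂_ℓ H_ℓ = {e}, the normal core of H_ℓ in H is C_ℓ = { (aN_ℓ, bN_ℓ, cN_ℓ) : a, b, c ∈ ℤ }, and the natural left action of H on the inverse limit X_∞ = lim← H/H_ℓ (with bonding maps induced by the inclusions H_{ℓ+1} ⊂ H_ℓ) is a minimal equicontinuous Cantor action that is topologically free and wild. -/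

import Mathlib

noncomputable section

open Set Topology

/-! ### The group of homeomorphisms -/

namespace Homeomorph

variable {X : Type*} [TopologicalSpace X]

instance instGroup' : Group (X ≃ₜ X) where
  mul f g := g.trans f
  one := Homeomorph.refl X
  inv := Homeomorph.symm
  mul_assoc f g h := rfl
  one_mul f := rfl
  mul_one f := rfl
  inv_mul_cancel f := Homeomorph.ext fun x => f.symm_apply_apply x

@[simp] theorem mul_apply' (f g : X ≃ₜ X) (x : X) : (f * g) x = f (g x) := rfl
@[simp] theorem one_apply' (x : X) : (1 : X ≃ₜ X) x = x := rfl
@[simp] theorem inv_eq_symm (f : X ≃ₜ X) : f⁻¹ = f.symm := rfl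

/-- The uniform topology (topology of uniform convergence, equivalently for a compact
metric space the compact-open topology) on the group of homeomorphisms of a compact
metric space, as the metric topology of the sup-metric. -/
instance instMetricSpaceHomeomorph {Y : Type*} [MetricSpace Y] [CompactSpace Y] :
    MetricSpace (Y ≃ₜ Y) :=
  MetricSpace.induced (fun h => (⟨h, h.continuous⟩ : C(Y, Y)))
    (fun f g hfg => Homeomorph.ext fun x => congrFun (congrArg ContinuousMap.toFun hfg) x)
    inferInstance

end Homeomorph

namespace Homeomorph

variable {Y : Type*} [MetricSpace Y] [CompactSpace Y]

theorem dist_eq_contMap (f g : Y ≃ₜ Y) :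
    dist f g = dist (⟨f, f.continuous⟩ : C(Y, Y)) (⟨g, g.continuous⟩ : C(Y, Y)) := rfl

theorem dist_apply_le (f g : Y ≃ₜ Y) (x : Y) : dist (f x) (g x) ≤ dist f g :=
  ContinuousMap.dist_apply_le_dist (f := (⟨f, f.continuous⟩ : C(Y, Y)))
    (g := (⟨g, g.continuous⟩ : C(Y, Y))) x

theorem dist_lt_iff' (f g : Y ≃ₜ Y) {C : ℝ} (hC : 0 < C) :
    dist f g < C ↔ ∀ x : Y, dist (f x) (g x) < C := by
  rw [dist_eq_contMap, ContinuousMap.dist_lt_iff hC]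
  rfl

instance : IsTopologicalGroup (Y ≃ₜ Y) where
  continuous_mul := by
    rw [Metric.continuous_iff]
    rintro ⟨f₀, g₀⟩ ε hε
    obtain ⟨δ₁, hδ₁, H₁⟩ := Metric.uniformContinuous_iff.mp
      (CompactSpace.uniformContinuous_of_continuous f₀.continuous) (ε / 2) (by positivity)
    refine ⟨min δ₁ (ε / 2), by positivity, ?_⟩
    rintro ⟨f, g⟩ hd
    have hdf : dist f f₀ < ε / 2 := by
      have h' : dist f f₀ ≤ dist ((f, g)) ((f₀, g₀)) := by
        rw [Prod.dist_eq]; exact le_max_left _ _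
      exact (h'.trans_lt hd).trans_le (min_le_right _ _)
    have hdg : dist g g₀ < δ₁ := by
      have h' : dist g g₀ ≤ dist ((f, g)) ((f₀, g₀)) := by
        rw [Prod.dist_eq]; exact le_max_right _ _
      exact (h'.trans_lt hd).trans_le (min_le_left _ _)
    rw [dist_lt_iff' _ _ hε]
    intro x
    have h1 : dist (f (g x)) (f₀ (g x)) < ε / 2 :=
      lt_of_le_of_lt (dist_apply_le f f₀ (g x)) hdf
    have h2 : dist (f₀ (g x)) (f₀ (g₀ x)) < ε / 2 :=
      H₁ (lt_of_le_of_lt (dist_apply_le g g₀ x) hdg)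
    calc dist ((f * g) x) ((f₀ * g₀) x) ≤ dist (f (g x)) (f₀ (g x)) + dist (f₀ (g x)) (f₀ (g₀ x)) :=
          dist_triangle _ _ _
      _ < ε / 2 + ε / 2 := by exact add_lt_add h1 h2
      _ = ε := by ring
  continuous_inv := by
    rw [Metric.continuous_iff]
    intro f₀ ε hε
    obtain ⟨δ, hδ, H⟩ := Metric.uniformContinuous_iff.mp
      (CompactSpace.uniformContinuous_of_continuous f₀.symm.continuous) ε hε
    refine ⟨δ, hδ, ?_⟩
    intro g hdg
    rw [dist_lt_iff' _ _ hε]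
    intro y
    have key : dist (g (g.symm y)) (f₀ (g.symm y)) < δ :=
      lt_of_le_of_lt (dist_apply_le g f₀ (g.symm y)) hdg
    have h2 := H key
    have h3 : dist (f₀.symm (g (g.symm y))) (f₀.symm (f₀ (g.symm y))) < ε := h2
    rw [Homeomorph.apply_symm_apply, Homeomorph.symm_apply_apply] at h3
    rw [dist_comm] at h3
    simpa using h3
end Homeomorph

/-! ### Steinitz (supernatural) numbers -/

/-- A Steinitz number: a formal product of primes with exponents in `ℕ∞`. -/
def SteinitzNum : Type := Nat.Primes → ℕ∞

namespace SteinitzNum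

/-- The Steinitz number associated to a natural number. -/
def ofNat (n : ℕ) : SteinitzNum := fun p => (n.factorization (p : ℕ) : ℕ∞)

/-- Multiplication of Steinitz numbers adds the exponents at each prime. -/
instance : Mul SteinitzNum := ⟨fun a b p => a p + b p⟩

/-- The least common multiple of a collection of positive integers, as a Steinitz number:
its exponent at `p` is the supremum of the `p`-adic valuations of the elements. -/
def lcmSet (S : Set ℕ) : SteinitzNum := fun p => ⨆ n ∈ S, (n.factorization (p : ℕ) : ℕ∞)

/-- Two Steinitz numbers are asymptotically equivalent if they agree after multiplication
by positive integers. -/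
def AsympEquiv (a b : SteinitzNum) : Prop :=
  ∃ n₀ m₀ : ℕ, 0 < n₀ ∧ 0 < m₀ ∧ ofNat n₀ * a = ofNat m₀ * b

/-- The prime spectrum of a Steinitz number: primes with nonzero exponent. -/
def primeSpectrum (a : SteinitzNum) : Set Nat.Primes := { p | a p ≠ 0 }

/-- The finite prime spectrum: primes with finite nonzero exponent. -/
def finitePrimeSpectrum (a : SteinitzNum) : Set Nat.Primes := { p | a p ≠ 0 ∧ a p ≠ ⊤ }

/-- The infinite prime spectrum: primes with infinite exponent. -/
def infinitePrimeSpectrum (a : SteinitzNum) : Set Nat.Primes := { p | a p = ⊤ }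

end SteinitzNum

/-! ### Steinitz orders for topological groups -/

/-- The Steinitz order of a topological group: the LCM of the orders of the finite
quotients `G/N` over open normal subgroups `N ⊆ G`. -/
def steinitzOrder (G : Type*) [Group G] [TopologicalSpace G] : SteinitzNum :=
  SteinitzNum.lcmSet
    { n | ∃ N : Subgroup G, N.Normal ∧ IsOpen (N : Set G) ∧ n = Nat.card (G ⧸ N) }

/-- The Steinitz order of a subgroup `D` of a topological group `G`: the LCM of the
cardinalities `|D/(N ∩ D)|` over open normal subgroups `N ⊆ G`. -/
def steinitzOrderOfSubgroup {G : Type*} [Group G] [TopologicalSpace G] (D : Subgroup G) :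
    SteinitzNum :=
  SteinitzNum.lcmSet
    { n | ∃ N : Subgroup G, N.Normal ∧ IsOpen (N : Set G) ∧
        n = Nat.card (↥D ⧸ (N.subgroupOf D)) }

/-- The relative Steinitz order of a subgroup `D` of a topological group `G`: the LCM of the
cardinalities `|G/(N · D)|` over open normal subgroups `N ⊆ G`. -/
def steinitzRelativeOrder {G : Type*} [Group G] [TopologicalSpace G] (D : Subgroup G) :
    SteinitzNum :=
  SteinitzNum.lcmSet
    { n | ∃ N : Subgroup G, N.Normal ∧ IsOpen (N : Set G) ∧ n = Nat.card (G ⧸ (N ⊔ D)) }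

/-- A profinite (compact Hausdorff totally disconnected) topological group is topologically
Noetherian if every increasing chain of closed subgroups has a maximal element. -/
def TopologicallyNoetherian (G : Type*) [Group G] [TopologicalSpace G] : Prop :=
  ∀ c : ℕ → Subgroup G, (∀ i, IsClosed (c i : Set G)) → Monotone c → ∃ i₀, ∀ i, c i ≤ c i₀

/-! ### Cantor actions -/

section CantorActions

variable {X : Type*} [MetricSpace X] {Γ : Type*} [Group Γ]

/-- An action is minimal if every orbit is dense. -/
def IsMinimalAction (Φ : Γ →* (X ≃ₜ X)) : Prop :=
  ∀ x : X, Dense (Set.range fun g : Γ => Φ g x)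

/-- An action is equicontinuous if it satisfies the uniform `ε`-`δ` condition with respect
to the metric. -/
def IsEquicontinuousAction (Φ : Γ →* (X ≃ₜ X)) : Prop :=
  ∀ ε : ℝ, 0 < ε → ∃ δ : ℝ, 0 < δ ∧
    ∀ x y : X, dist x y < δ → ∀ g : Γ, dist (Φ g x) (Φ g y) < ε

variable [CompactSpace X]

/-- `G(Φ)`: the closure of the image of `Γ` in `Homeo(X)`, in the uniform topology. -/
def profiniteClosure (Φ : Γ →* (X ≃ₜ X)) : Subgroup (X ≃ₜ X) :=
  Φ.range.topologicalClosure

/-- The discriminant group: the isotropy subgroup of `G(Φ)` at `x`. -/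
def discriminant (Φ : Γ →* (X ≃ₜ X)) (x : X) : Subgroup (profiniteClosure Φ) where
  carrier := { h | (h : X ≃ₜ X) x = x }
  one_mem' := rfl
  mul_mem' := by
    intro a b ha hb
    simp only [Set.mem_setOf_eq] at *
    show ((a : X ≃ₜ X) * (b : X ≃ₜ X)) x = x
    rw [Homeomorph.mul_apply', hb, ha]
  inv_mem' := by
    intro a ha
    simp only [Set.mem_setOf_eq] at *
    show ((a : X ≃ₜ X)⁻¹) x = x
    rw [Homeomorph.inv_eq_symm]
    conv_lhs => rw [← ha]
    exact Homeomorph.symm_apply_apply _ _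

/-- The Steinitz order `Π[G(Φ)]` of a Cantor action. -/
def steinitzOrderAction (Φ : Γ →* (X ≃ₜ X)) : SteinitzNum :=
  steinitzOrder ↥(profiniteClosure Φ)

/-- The Steinitz order `Π[D(Φ,x)]` of the discriminant of a Cantor action. -/
def steinitzOrderDisc (Φ : Γ →* (X ≃ₜ X)) (x : X) : SteinitzNum :=
  steinitzOrderOfSubgroup (discriminant Φ x)

/-- The relative Steinitz order `Π[G(Φ) : D(Φ,x)]` of a Cantor action. -/
def steinitzOrderRel (Φ : Γ →* (X ≃ₜ X)) (x : X) : SteinitzNum :=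
  steinitzRelativeOrder (discriminant Φ x)

end CantorActions

/-! ### Adapted sets, holonomy and return equivalence -/

section Adapted

variable {X : Type*} [MetricSpace X] {Γ : Type*} [Group Γ]

/-- A nonempty clopen subset `U ⊆ X` is adapted to the action `Φ` if every group element
either fixes `U` or moves it entirely off of itself. -/
def IsAdaptedSet (Φ : Γ →* (X ≃ₜ X)) (U : Set X) : Prop :=
  U.Nonempty ∧ IsClopen U ∧ ∀ g : Γ, ((Φ g) '' U ∩ U).Nonempty → (Φ g) '' U = U

/-- The stabilizer subgroup `Γ_U` of an adapted set. -/
def adaptedStabilizer (Φ : Γ →* (X ≃ₜ X)) (U : Set X) : Subgroup Γ where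
  carrier := { g | (Φ g) '' U = U }
  one_mem' := by ext x; simp
  mul_mem' := by
    intro a b ha hb
    simp only [Set.mem_setOf_eq] at *
    rw [map_mul]
    show ((Φ a) * (Φ b)) '' U = U
    have : (((Φ a) * (Φ b) : X ≃ₜ X) : X → X) = (Φ a) ∘ (Φ b) := rfl
    rw [this, Set.image_comp, hb, ha]
  inv_mem' := by
    intro a ha
    simp only [Set.mem_setOf_eq] at *
    rw [map_inv, Homeomorph.inv_eq_symm]
    conv_lhs => rw [← ha]
    rw [← Set.image_comp]
    simp

/-- The homeomorphism of an invariant set induced by a homeomorphism of `X`. -/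
def restrictHomeo (h : X ≃ₜ X) {U : Set X} (hU : h '' U = U) : U ≃ₜ U :=
  (h.image U).trans (Homeomorph.setCongr hU)

@[simp] theorem restrictHomeo_coe (h : X ≃ₜ X) {U : Set X} (hU : h '' U = U) (x : U) :
    (restrictHomeo h hU x : X) = h x := rfl

/-- The holonomy homomorphism of an adapted set: restriction of the stabilizer to `U`. -/
def holonomyHom (Φ : Γ →* (X ≃ₜ X)) (U : Set X) :
    adaptedStabilizer Φ U →* (↥U ≃ₜ ↥U) where
  toFun g := restrictHomeo (Φ (g : Γ)) g.2
  map_one' := by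
    ext x
    show ((restrictHomeo (Φ ((1 : adaptedStabilizer Φ U) : Γ)) _ x : X) = _)
    simp
  map_mul' := by
    intro a b
    ext x
    show ((restrictHomeo (Φ ((a * b : adaptedStabilizer Φ U) : Γ)) _ x : X) = _)
    simp only [restrictHomeo_coe, Subgroup.coe_mul, map_mul]
    rfl

/-- The holonomy group `H_U` of an adapted set: the image of the stabilizer in `Homeo(U)`. -/
def holonomyGroup (Φ : Γ →* (X ≃ₜ X)) (U : Set X) : Subgroup (↥U ≃ₜ ↥U) :=
  (holonomyHom Φ U).range

end Adapted

/-- Two Cantor actions are return equivalent if they admit adapted sets whose holonomy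
actions are isomorphic, via a homeomorphism between the adapted sets together with a
compatible isomorphism of the holonomy groups. -/
def ReturnEquivalent
    {X₁ : Type*} [MetricSpace X₁] {Γ₁ : Type*} [Group Γ₁]
    {X₂ : Type*} [MetricSpace X₂] {Γ₂ : Type*} [Group Γ₂]
    (Φ₁ : Γ₁ →* (X₁ ≃ₜ X₁)) (Φ₂ : Γ₂ →* (X₂ ≃ₜ X₂)) : Prop :=
  ∃ (U₁ : Set X₁) (U₂ : Set X₂), IsAdaptedSet Φ₁ U₁ ∧ IsAdaptedSet Φ₂ U₂ ∧
    ∃ (h : ↥U₁ ≃ₜ ↥U₂) (θ : holonomyGroup Φ₁ U₁ ≃* holonomyGroup Φ₂ U₂),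
      ∀ k : holonomyGroup Φ₁ U₁,
        ((θ k : ↥U₂ ≃ₜ ↥U₂)) = h.symm.trans (((k : ↥U₁ ≃ₜ ↥U₁)).trans h)

section Regularity

variable {X : Type*} [MetricSpace X]

/-- An action of a group `H` on `X` through a homomorphism `ρ : H →* Homeo(X)` is locally
quasi-analytic if there is `ε > 0` so that for every nonempty open `U` of diameter less
than `ε`, any element acting as the identity on a nonempty open subset `V ⊆ U` with
`ρ g (V) = V` acts as the identity on all of `U`. -/
def IsLocallyQuasiAnalytic {H : Type*} [Group H] (ρ : H →* (X ≃ₜ X)) : Prop :=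
  ∃ ε : ℝ, 0 < ε ∧ ∀ U : Set X, IsOpen U → U.Nonempty → Metric.diam U < ε →
    ∀ V : Set X, V ⊆ U → IsOpen V → V.Nonempty →
      ∀ g : H, (ρ g) '' V = V → (∀ x ∈ V, ρ g x = x) → ∀ x ∈ U, ρ g x = x

variable [CompactSpace X] {Γ : Type*} [Group Γ]

/-- A Cantor action is stable if the induced action of `G(Φ)` on `X` is locally
quasi-analytic; otherwise it is wild. -/
def IsStableAction (Φ : Γ →* (X ≃ₜ X)) : Prop :=
  IsLocallyQuasiAnalytic (profiniteClosure Φ).subtype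

/-- An action is topologically free if the set of points fixed by some nontrivial group
element is meagre. -/
def IsTopologicallyFree (Φ : Γ →* (X ≃ₜ X)) : Prop :=
  IsMeagre { x : X | ∃ g : Γ, g ≠ 1 ∧ Φ g x = x }

end Regularity

/-! ### The integer Heisenberg group -/

/-- The integer Heisenberg group: `ℤ³` with the multiplication
`(a,b,c)·(a',b',c') = (a+a', b+b', c+c'+ab')`. -/
@[ext] structure Heisenberg where
  a : ℤ
  b : ℤ
  c : ℤ

namespace Heisenberg

instance : Mul Heisenberg :=
  ⟨fun x y => ⟨x.a + y.a, x.b + y.b, x.c + y.c + x.a * y.b⟩⟩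

instance : One Heisenberg := ⟨⟨0, 0, 0⟩⟩

instance : Inv Heisenberg := ⟨fun x => ⟨-x.a, -x.b, -x.c + x.a * x.b⟩⟩

@[simp] theorem mul_a (x y : Heisenberg) : (x * y).a = x.a + y.a := rfl
@[simp] theorem mul_b (x y : Heisenberg) : (x * y).b = x.b + y.b := rfl
@[simp] theorem mul_c (x y : Heisenberg) : (x * y).c = x.c + y.c + x.a * y.b := rfl
@[simp] theorem one_a : (1 : Heisenberg).a = 0 := rfl
@[simp] theorem one_b : (1 : Heisenberg).b = 0 := rfl
@[simp] theorem one_c : (1 : Heisenberg).c = 0 := rfl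
@[simp] theorem inv_a (x : Heisenberg) : x⁻¹.a = -x.a := rfl
@[simp] theorem inv_b (x : Heisenberg) : x⁻¹.b = -x.b := rfl
@[simp] theorem inv_c (x : Heisenberg) : x⁻¹.c = -x.c + x.a * x.b := rfl

instance : Group Heisenberg where
  mul := (· * ·)
  one := 1
  inv := (·⁻¹)
  mul_assoc x y z := by ext <;> simp <;> ring
  one_mul x := by ext <;> simp
  mul_one x := by ext <;> simp
  inv_mul_cancel x := by ext <;> simp

instance : Countable Heisenberg :=
  Function.Injective.countable (f := fun x : Heisenberg => (x.a, x.b, x.c))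
    (by
      intro x y h
      injection h with h1 h2
      injection h2 with h3 h4
      ext <;> assumption)

end Heisenberg

/-! ### The Heisenberg group chain and its inverse limit space -/

/-- `M_ℓ = q₀ q₁ ⋯ q_ℓ`. -/
def heisM (q : ℕ → ℕ) (ℓ : ℕ) : ℤ := ∏ i ∈ Finset.range (ℓ + 1), (q i : ℤ)

/-- `N_ℓ = q₀² q₁² ⋯ q_ℓ²`. -/
def heisN (q : ℕ → ℕ) (ℓ : ℕ) : ℤ := ∏ i ∈ Finset.range (ℓ + 1), (q i : ℤ) ^ 2

/-- The subgroup `H_ℓ = {(a M_ℓ, b N_ℓ, c N_ℓ) : a, b, c ∈ ℤ}` of the Heisenberg group. -/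
def heisSub (q : ℕ → ℕ) (ℓ : ℕ) : Subgroup Heisenberg where
  carrier := { x | heisM q ℓ ∣ x.a ∧ heisN q ℓ ∣ x.b ∧ heisN q ℓ ∣ x.c }
  one_mem' := by
    refine ⟨?_, ?_, ?_⟩ <;> simp
  mul_mem' := by
    rintro x y ⟨hxa, hxb, hxc⟩ ⟨hya, hyb, hyc⟩
    refine ⟨?_, ?_, ?_⟩
    · rw [Heisenberg.mul_a]; exact dvd_add hxa hya
    · rw [Heisenberg.mul_b]; exact dvd_add hxb hyb
    · rw [Heisenberg.mul_c]; exact dvd_add (dvd_add hxc hyc) (hyb.mul_left _)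
  inv_mem' := by
    rintro x ⟨ha, hb, hc⟩
    refine ⟨?_, ?_, ?_⟩
    · rw [Heisenberg.inv_a]; exact dvd_neg.mpr ha
    · rw [Heisenberg.inv_b]; exact dvd_neg.mpr hb
    · rw [Heisenberg.inv_c]; exact dvd_add (dvd_neg.mpr hc) (hb.mul_left _)

theorem mem_heisSub {q : ℕ → ℕ} {ℓ : ℕ} {x : Heisenberg} :
    x ∈ heisSub q ℓ ↔ heisM q ℓ ∣ x.a ∧ heisN q ℓ ∣ x.b ∧ heisN q ℓ ∣ x.c := Iff.rfl

/-- The subgroup `C_ℓ = {(a N_ℓ, b N_ℓ, c N_ℓ) : a, b, c ∈ ℤ}` of the Heisenberg group. -/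
def heisCore (q : ℕ → ℕ) (ℓ : ℕ) : Subgroup Heisenberg where
  carrier := { x | heisN q ℓ ∣ x.a ∧ heisN q ℓ ∣ x.b ∧ heisN q ℓ ∣ x.c }
  one_mem' := by
    refine ⟨?_, ?_, ?_⟩ <;> simp
  mul_mem' := by
    rintro x y ⟨hxa, hxb, hxc⟩ ⟨hya, hyb, hyc⟩
    refine ⟨?_, ?_, ?_⟩
    · rw [Heisenberg.mul_a]; exact dvd_add hxa hya
    · rw [Heisenberg.mul_b]; exact dvd_add hxb hyb
    · rw [Heisenberg.mul_c]; exact dvd_add (dvd_add hxc hyc) (hyb.mul_left _)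
  inv_mem' := by
    rintro x ⟨ha, hb, hc⟩
    refine ⟨?_, ?_, ?_⟩
    · rw [Heisenberg.inv_a]; exact dvd_neg.mpr ha
    · rw [Heisenberg.inv_b]; exact dvd_neg.mpr hb
    · rw [Heisenberg.inv_c]; exact dvd_add (dvd_neg.mpr hc) (hb.mul_left _)

theorem heisM_dvd_succ (q : ℕ → ℕ) (ℓ : ℕ) : heisM q ℓ ∣ heisM q (ℓ + 1) := by
  exact Finset.prod_dvd_prod_of_subset _ _ (fun i => (q i : ℤ))
    (Finset.range_subset_range.mpr (by omega))

theorem heisN_dvd_succ (q : ℕ → ℕ) (ℓ : ℕ) : heisN q ℓ ∣ heisN q (ℓ + 1) := by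
  exact Finset.prod_dvd_prod_of_subset _ _ (fun i => (q i : ℤ) ^ 2)
    (Finset.range_subset_range.mpr (by omega))

theorem heisSub_antitone (q : ℕ → ℕ) (ℓ : ℕ) : heisSub q (ℓ + 1) ≤ heisSub q ℓ := by
  rintro x ⟨ha, hb, hc⟩
  exact ⟨(heisM_dvd_succ q ℓ).trans ha, (heisN_dvd_succ q ℓ).trans hb,
    (heisN_dvd_succ q ℓ).trans hc⟩

instance (H : Subgroup Heisenberg) : Countable (Heisenberg ⧸ H) :=
  inferInstanceAs (Countable (Quotient (QuotientGroup.leftRel H)))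

/-- A metric realizing the discrete topology on the coset space `H ⧸ K`. -/
noncomputable instance (H : Subgroup Heisenberg) : MetricSpace (Heisenberg ⧸ H) :=
  letI : Encodable (Heisenberg ⧸ H) := Encodable.ofCountable _
  MetricSpace.induced Encodable.encode Encodable.encode_injective inferInstance

instance (H : Subgroup Heisenberg) : DiscreteTopology (Heisenberg ⧸ H) := by
  letI : Encodable (Heisenberg ⧸ H) := Encodable.ofCountable _
  have hiso : Isometry (Encodable.encode : Heisenberg ⧸ H → ℕ) :=
    Isometry.of_dist_eq fun _ _ => rfl
  exact hiso.isEmbedding.discreteTopology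

/-- The bonding map `H/H_{ℓ+1} → H/H_ℓ` of the inverse limit, induced by the
inclusion `H_{ℓ+1} ⊆ H_ℓ`. -/
def heisBond (q : ℕ → ℕ) (ℓ : ℕ) :
    Heisenberg ⧸ heisSub q (ℓ + 1) → Heisenberg ⧸ heisSub q ℓ :=
  Subgroup.quotientMapOfLE (heisSub_antitone q ℓ)

theorem heisBond_smul (q : ℕ → ℕ) (ℓ : ℕ) (g : Heisenberg)
    (z : Heisenberg ⧸ heisSub q (ℓ + 1)) :
    heisBond q ℓ (g • z) = g • heisBond q ℓ z := by
  induction z using Quotient.inductionOn' with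
  | h z => rfl

/-- The inverse limit `X_∞ = lim← H/H_ℓ` of the coset spaces of the chain `H_ℓ`. -/
def XinfH (q : ℕ → ℕ) : Type :=
  { x : ∀ ℓ, Heisenberg ⧸ heisSub q ℓ // ∀ ℓ, heisBond q ℓ (x (ℓ + 1)) = x ℓ }

noncomputable instance (q : ℕ → ℕ) : MetricSpace (∀ ℓ, Heisenberg ⧸ heisSub q ℓ) :=
  PiCountable.metricSpace

noncomputable instance (q : ℕ → ℕ) : MetricSpace (XinfH q) :=
  inferInstanceAs (MetricSpace
    { x : ∀ ℓ, Heisenberg ⧸ heisSub q ℓ // ∀ ℓ, heisBond q ℓ (x (ℓ + 1)) = x ℓ })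

theorem heisM_ne_zero {q : ℕ → ℕ} (hq : ∀ i, q i ≠ 0) (ℓ : ℕ) : heisM q ℓ ≠ 0 :=
  Finset.prod_ne_zero_iff.mpr fun i _ => Int.natCast_ne_zero.mpr (hq i)

theorem heisN_ne_zero {q : ℕ → ℕ} (hq : ∀ i, q i ≠ 0) (ℓ : ℕ) : heisN q ℓ ≠ 0 :=
  Finset.prod_ne_zero_iff.mpr fun i _ => pow_ne_zero _ (Int.natCast_ne_zero.mpr (hq i))

/-- An auxiliary congruence: integers whose difference is divisible by `n` have equal
images in `ZMod n.natAbs`. -/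
theorem zmod_eq_of_dvd_sub {z w n : ℤ} (h : n ∣ w - z) :
    ((z : ZMod n.natAbs) = (w : ZMod n.natAbs)) :=
  (ZMod.intCast_eq_intCast_iff _ _ _).mpr ((Int.modEq_iff_dvd).mpr (Int.natAbs_dvd.mpr h))

theorem dvd_sub_of_zmod_eq {z w n : ℤ} (h : ((z : ZMod n.natAbs) = (w : ZMod n.natAbs))) :
    n ∣ w - z :=
  Int.natAbs_dvd.mp ((Int.modEq_iff_dvd).mp ((ZMod.intCast_eq_intCast_iff _ _ _).mp h))

theorem heisQuot_finite {q : ℕ → ℕ} (hq : ∀ i, q i ≠ 0) (ℓ : ℕ) :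
    Finite (Heisenberg ⧸ heisSub q ℓ) := by
  have hM0 := heisM_ne_zero hq ℓ
  have hN0 := heisN_ne_zero hq ℓ
  haveI : NeZero (heisM q ℓ).natAbs := ⟨Int.natAbs_ne_zero.mpr hM0⟩
  haveI : NeZero (heisN q ℓ).natAbs := ⟨Int.natAbs_ne_zero.mpr hN0⟩
  set m := (heisM q ℓ).natAbs
  set nn := (heisN q ℓ).natAbs
  let F : Heisenberg ⧸ heisSub q ℓ → ZMod m × ZMod nn × ZMod nn := fun z =>
    Quotient.liftOn' z
      (fun g => ((g.a : ZMod m), (g.b : ZMod nn), (g.c : ZMod nn)))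
      (by
        intro x y hxy
        obtain ⟨ha, hb, hc⟩ := QuotientGroup.leftRel_apply.mp hxy
        rw [Heisenberg.mul_a, Heisenberg.inv_a] at ha
        rw [Heisenberg.mul_b, Heisenberg.inv_b] at hb
        rw [Heisenberg.mul_c, Heisenberg.inv_c, Heisenberg.inv_a] at hc
        have ha' : heisM q ℓ ∣ y.a - x.a := by rwa [neg_add_eq_sub] at ha
        have hb' : heisN q ℓ ∣ y.b - x.b := by rwa [neg_add_eq_sub] at hb
        have hc' : heisN q ℓ ∣ y.c - x.c := by
          have hrw : y.c - x.c = (-x.c + x.a * x.b + y.c + -x.a * y.b) + x.a * (-x.b + y.b) := by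
            ring
          rw [hrw]
          exact dvd_add hc (Dvd.dvd.mul_left hb x.a)
        exact Prod.ext (zmod_eq_of_dvd_sub ha')
          (Prod.ext (zmod_eq_of_dvd_sub hb') (zmod_eq_of_dvd_sub hc')))
  have hFinj : Function.Injective F := by
    intro z w
    induction z using Quotient.inductionOn' with
    | h x =>
      induction w using Quotient.inductionOn' with
      | h y =>
        intro hEq
        have h1 : ((x.a : ZMod m), (x.b : ZMod nn), (x.c : ZMod nn))
            = ((y.a : ZMod m), (y.b : ZMod nn), (y.c : ZMod nn)) := hEq
        have ha := dvd_sub_of_zmod_eq (n := heisM q ℓ) (congrArg Prod.fst h1)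
        have hb := dvd_sub_of_zmod_eq (n := heisN q ℓ) (congrArg (Prod.fst ∘ Prod.snd) h1)
        have hc := dvd_sub_of_zmod_eq (n := heisN q ℓ) (congrArg (Prod.snd ∘ Prod.snd) h1)
        apply Quotient.sound'
        apply QuotientGroup.leftRel_apply.mpr
        refine ⟨?_, ?_, ?_⟩
        · rw [Heisenberg.mul_a, Heisenberg.inv_a, neg_add_eq_sub]; exact ha
        · rw [Heisenberg.mul_b, Heisenberg.inv_b, neg_add_eq_sub]; exact hb
        · rw [Heisenberg.mul_c, Heisenberg.inv_c, Heisenberg.inv_a]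
          have hrw : -x.c + x.a * x.b + y.c + -x.a * y.b
              = (y.c - x.c) + x.a * -(y.b - x.b) := by ring
          rw [hrw]
          exact dvd_add hc (Dvd.dvd.mul_left (dvd_neg.mpr hb) x.a)
  exact Finite.of_injective F hFinj

theorem xinfH_compactSpace (q : ℕ → ℕ) (hq : ∀ i, q i ≠ 0) : CompactSpace (XinfH q) := by
  haveI : ∀ ℓ, Finite (Heisenberg ⧸ heisSub q ℓ) := fun ℓ => heisQuot_finite hq ℓ
  haveI : ∀ ℓ, CompactSpace (Heisenberg ⧸ heisSub q ℓ) := fun ℓ => Finite.compactSpace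
  have hclosed : IsClosed { x : ∀ ℓ, Heisenberg ⧸ heisSub q ℓ |
      ∀ ℓ, heisBond q ℓ (x (ℓ + 1)) = x ℓ } := by
    have hrw : { x : ∀ ℓ, Heisenberg ⧸ heisSub q ℓ | ∀ ℓ, heisBond q ℓ (x (ℓ + 1)) = x ℓ }
        = ⋂ ℓ, { x : ∀ ℓ, Heisenberg ⧸ heisSub q ℓ | heisBond q ℓ (x (ℓ + 1)) = x ℓ } := by
      ext x; simp [Set.mem_iInter]
    rw [hrw]
    refine isClosed_iInter fun ℓ => isClosed_eq ?_ (continuous_apply ℓ)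
    exact (continuous_of_discreteTopology (f := heisBond q ℓ)).comp (continuous_apply (ℓ + 1))
  exact isCompact_iff_compactSpace.mp hclosed.isCompact

/-- The homeomorphism of `X_∞` given by the left translation action of `g`. -/
def heisActHomeo (q : ℕ → ℕ) (g : Heisenberg) : XinfH q ≃ₜ XinfH q where
  toFun x := ⟨fun ℓ => g • x.1 ℓ, fun ℓ => by rw [heisBond_smul, x.2 ℓ]⟩
  invFun x := ⟨fun ℓ => g⁻¹ • x.1 ℓ, fun ℓ => by rw [heisBond_smul, x.2 ℓ]⟩
  left_inv x := Subtype.ext (funext fun ℓ => inv_smul_smul g (x.1 ℓ))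
  right_inv x := Subtype.ext (funext fun ℓ => smul_inv_smul g (x.1 ℓ))
  continuous_toFun := by
    refine Continuous.subtype_mk (continuous_pi fun ℓ => ?_) _
    exact (continuous_of_discreteTopology
        (f := fun z : Heisenberg ⧸ heisSub q ℓ => g • z)).comp
      ((continuous_apply ℓ).comp continuous_subtype_val)
  continuous_invFun := by
    refine Continuous.subtype_mk (continuous_pi fun ℓ => ?_) _
    exact (continuous_of_discreteTopology
        (f := fun z : Heisenberg ⧸ heisSub q ℓ => g⁻¹ • z)).comp
      ((continuous_apply ℓ).comp continuous_subtype_val)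

/-- The natural left action of the Heisenberg group on the inverse limit
`X_∞ = lim← H/H_ℓ`. -/
def heisAct (q : ℕ → ℕ) : Heisenberg →* (XinfH q ≃ₜ XinfH q) where
  toFun := heisActHomeo q
  map_one' := Homeomorph.ext fun x => Subtype.ext (funext fun ℓ => one_smul _ (x.1 ℓ))
  map_mul' g h := Homeomorph.ext fun x => Subtype.ext (funext fun ℓ => mul_smul g h (x.1 ℓ))

/-! ### Auxiliary lemmas for the Heisenberg chain action -/

namespace HeisenbergChain

variable {q : ℕ → ℕ}

/-- Conjugation formula: `a`-component. -/
theorem conj_a (g x : Heisenberg) : (g * x * g⁻¹).a = x.a := by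
  simp [Heisenberg.mul_a, Heisenberg.inv_a]

theorem conj_b (g x : Heisenberg) : (g * x * g⁻¹).b = x.b := by
  simp [Heisenberg.mul_b, Heisenberg.inv_b]

theorem conj_c (g x : Heisenberg) :
    (g * x * g⁻¹).c = x.c + g.a * x.b - g.b * x.a := by
  simp [Heisenberg.mul_c, Heisenberg.mul_a, Heisenberg.mul_b, Heisenberg.inv_a,
    Heisenberg.inv_b, Heisenberg.inv_c]
  ring

theorem heisM_eq_natCast (q : ℕ → ℕ) (ℓ : ℕ) :
    heisM q ℓ = ((∏ i ∈ Finset.range (ℓ + 1), q i : ℕ) : ℤ) := by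
  rw [heisM]; push_cast; rfl

theorem heisN_eq_sq (q : ℕ → ℕ) (ℓ : ℕ) : heisN q ℓ = heisM q ℓ ^ 2 := by
  rw [heisM, heisN, ← Finset.prod_pow]

theorem heisM_dvd_heisN (q : ℕ → ℕ) (ℓ : ℕ) : heisM q ℓ ∣ heisN q ℓ := by
  rw [heisN_eq_sq, sq]; exact dvd_mul_left _ _

theorem heisM_dvd_of_le (q : ℕ → ℕ) {ℓ m : ℕ} (h : ℓ ≤ m) : heisM q ℓ ∣ heisM q m :=
  Finset.prod_dvd_prod_of_subset _ _ (fun i => (q i : ℤ))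
    (Finset.range_subset_range.mpr (by omega))

theorem heisN_dvd_of_le (q : ℕ → ℕ) {ℓ m : ℕ} (h : ℓ ≤ m) : heisN q ℓ ∣ heisN q m :=
  Finset.prod_dvd_prod_of_subset _ _ (fun i => (q i : ℤ) ^ 2)
    (Finset.range_subset_range.mpr (by omega))

theorem two_pow_le_heisM (hq : ∀ i, Nat.Prime (q i)) (ℓ : ℕ) :
    (2 : ℤ) ^ (ℓ + 1) ≤ heisM q ℓ := by
  rw [heisM]
  calc (2:ℤ) ^ (ℓ+1) = ∏ _i ∈ Finset.range (ℓ + 1), (2:ℤ) := by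
        rw [Finset.prod_const, Finset.card_range]
    _ ≤ ∏ i ∈ Finset.range (ℓ + 1), (q i : ℤ) := by
        refine Finset.prod_le_prod (fun i _ => by norm_num) (fun i _ => ?_)
        exact_mod_cast (hq i).two_le

/-- If an integer is divisible by every `M_ℓ`, it is zero. -/
theorem eq_zero_of_forall_heisM_dvd (hq : ∀ i, Nat.Prime (q i)) {z : ℤ}
    (h : ∀ ℓ, heisM q ℓ ∣ z) : z = 0 := by
  by_contra hz
  set L := z.natAbs with hL
  have h1 : (2:ℤ) ^ (L + 1) ≤ heisM q L := two_pow_le_heisM hq L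
  have h2 : heisM q L ≤ |z| :=
    Int.le_of_dvd (abs_pos.mpr hz) ((dvd_abs _ _).mpr (h L))
  have h3 : |z| = (L : ℤ) := by rw [hL, Int.abs_eq_natAbs]
  have h4 : (L : ℤ) < 2 ^ (L+1) := by
    have := Nat.lt_two_pow_self (n := L)
    have h5 : (L:ℤ) < 2 ^ L := by exact_mod_cast this
    have : (2:ℤ)^L ≤ 2^(L+1) := by
      have : (0:ℤ) < 2 := by norm_num
      exact pow_le_pow_right₀ (by norm_num) (by omega)
    omega
  omega

theorem heis_eq_one_of_forall_mem (hq : ∀ i, Nat.Prime (q i)) {g : Heisenberg}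
    (h : ∀ ℓ, g ∈ heisSub q ℓ) : g = 1 := by
  have ha : g.a = 0 := eq_zero_of_forall_heisM_dvd hq fun ℓ => (h ℓ).1
  have hb : g.b = 0 := eq_zero_of_forall_heisM_dvd hq
    fun ℓ => (heisM_dvd_heisN q ℓ).trans (h ℓ).2.1
  have hc : g.c = 0 := eq_zero_of_forall_heisM_dvd hq
    fun ℓ => (heisM_dvd_heisN q ℓ).trans (h ℓ).2.2
  ext <;> assumption

theorem heisCore_normal (q : ℕ → ℕ) (ℓ : ℕ) : (heisCore q ℓ).Normal := by
  constructor
  rintro x ⟨ha, hb, hc⟩ g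
  refine ⟨?_, ?_, ?_⟩
  · rw [conj_a]; exact ha
  · rw [conj_b]; exact hb
  · rw [conj_c]; exact dvd_sub (dvd_add hc (hb.mul_left _)) (ha.mul_left _)

theorem heisCore_le_heisSub (q : ℕ → ℕ) (ℓ : ℕ) : heisCore q ℓ ≤ heisSub q ℓ := by
  rintro x ⟨ha, hb, hc⟩
  exact ⟨(heisM_dvd_heisN q ℓ).trans ha, hb, hc⟩

theorem normalCore_heisSub (q : ℕ → ℕ) (ℓ : ℕ) :
    (heisSub q ℓ).normalCore = heisCore q ℓ := by
  apply le_antisymm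
  · intro x hx
    have hx' : ∀ b : Heisenberg, b * x * b⁻¹ ∈ heisSub q ℓ := hx
    have h1 : x ∈ heisSub q ℓ := by simpa using hx' 1
    obtain ⟨ha, hb, hc⟩ := h1
    have h2 := hx' ⟨0, -1, 0⟩
    rw [mem_heisSub, conj_a, conj_b, conj_c] at h2
    obtain ⟨-, -, h2c⟩ := h2
    have h2c' : heisN q ℓ ∣ x.c + x.a := by
      have : x.c + (0:ℤ) * x.b - (-1) * x.a = x.c + x.a := by ring
      rwa [this] at h2c
    exact ⟨(dvd_add_right hc).mp h2c', hb, hc⟩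
  · haveI := heisCore_normal q ℓ
    exact Subgroup.normal_le_normalCore.mpr (heisCore_le_heisSub q ℓ)

/-! ### Points and coordinates of `XinfH` -/

theorem heisBond_mk (q : ℕ → ℕ) (ℓ : ℕ) (g : Heisenberg) :
    heisBond q ℓ (QuotientGroup.mk g) = QuotientGroup.mk g := rfl

/-- Coherence: lower coordinates are determined by higher ones. -/
theorem coord_of_le (x : XinfH q) {ℓ m : ℕ} (h : ℓ ≤ m) (g : Heisenberg)
    (hg : x.1 m = QuotientGroup.mk g) : x.1 ℓ = QuotientGroup.mk g := by
  induction m with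
  | zero =>
    have : ℓ = 0 := by omega
    rw [this]; exact hg
  | succ m ih =>
    rcases Nat.eq_or_lt_of_le h with h' | h'
    · rw [h']; exact hg
    · refine ih (by omega) ?_
      rw [← x.2 m, hg, heisBond_mk]
  
/-- The point of `XinfH` determined by a group element. -/
def heisPt (q : ℕ → ℕ) (g : Heisenberg) : XinfH q :=
  ⟨fun _ => QuotientGroup.mk g, fun _ => rfl⟩

@[simp] theorem heisPt_coord (q : ℕ → ℕ) (g : Heisenberg) (ℓ : ℕ) :
    (heisPt q g).1 ℓ = QuotientGroup.mk g := rfl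

theorem heisAct_coord (q : ℕ → ℕ) (g : Heisenberg) (x : XinfH q) (ℓ : ℕ) :
    ((heisAct q g) x).1 ℓ = g • x.1 ℓ := rfl

/-! ### Metric estimates on `XinfH` -/

theorem xinfH_dist_eq (x y : XinfH q) :
    dist x y = ∑' i : ℕ, min ((1/2 : ℝ) ^ i) (dist (x.1 i) (y.1 i)) := by
  have h : dist x y = dist x.1 y.1 := Subtype.dist_eq x y
  rw [h]
  have : dist x.1 y.1
      = ∑' i : ℕ, min ((1/2 : ℝ) ^ (Encodable.encode i)) (dist (x.1 i) (y.1 i)) := by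
    simp only [one_div]; exact PiCountable.dist_eq_tsum _ _
  rw [this]
  exact tsum_congr fun i => by rw [Encodable.encode_nat]

theorem xinfH_summable (x y : XinfH q) :
    Summable fun i : ℕ => min ((1/2 : ℝ) ^ i) (dist (x.1 i) (y.1 i)) := by
  refine Summable.of_nonneg_of_le (fun i => ?_) (fun i => min_le_left _ _)
    summable_geometric_two
  exact le_min (by positivity) dist_nonneg

theorem tsum_tail_geometric (L : ℕ) :
    ∑' i : ℕ, (if i ≤ L then (0:ℝ) else (1/2)^i) = (1/2)^L := by
  have hinj : Function.Injective (fun k : ℕ => k + (L+1)) := add_left_injective _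
  have hsupp : Function.support (fun i : ℕ => if i ≤ L then (0:ℝ) else (1/2)^i)
      ⊆ Set.range (fun k : ℕ => k + (L+1)) := by
    intro i hi
    rcases le_or_gt i L with h | h
    · simp [Function.mem_support, if_pos h] at hi
    · exact ⟨i - (L+1), by simp; omega⟩
  rw [← hinj.tsum_eq hsupp]
  have heq : ∀ k : ℕ, (if k + (L+1) ≤ L then (0:ℝ) else (1/2)^(k + (L+1)))
      = (1/2)^(L+1) * (1/2)^k := by
    intro k
    rw [if_neg (by omega), pow_add, mul_comm]
  rw [tsum_congr heq, tsum_mul_left, tsum_geometric_two, pow_succ]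
  ring

/-- If two points agree at level `L` (hence at all lower levels), their distance is at
most `(1/2)^L`. -/
theorem xinfH_dist_le {x y : XinfH q} {L : ℕ} (h : x.1 L = y.1 L) :
    dist x y ≤ (1/2 : ℝ) ^ L := by
  have hcoord : ∀ i, i ≤ L → x.1 i = y.1 i := by
    intro i hi
    obtain ⟨g, hg⟩ := QuotientGroup.mk_surjective (x.1 L)
    rw [coord_of_le x hi g hg.symm, coord_of_le y hi g (by rw [← h, ← hg])]
  rw [xinfH_dist_eq, ← tsum_tail_geometric L]
  refine Summable.tsum_le_tsum (fun i => ?_) (xinfH_summable x y) ?_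
  · rcases le_or_gt i L with hi | hi
    · rw [if_pos hi, hcoord i hi]
      simp [min_le_right]
    · rw [if_neg (by omega)]
      exact min_le_left _ _
  · apply Summable.of_nonneg_of_le (fun i => ?_) (fun i => ?_) summable_geometric_two
    · positivity
    · rcases le_or_gt i L with hi | hi
      · rw [if_pos hi]; positivity
      · rw [if_neg (by omega)]

theorem one_le_dist_quot {ℓ : ℕ} {z w : Heisenberg ⧸ heisSub q ℓ} (h : z ≠ w) :
    (1:ℝ) ≤ dist z w := by
  letI : Encodable (Heisenberg ⧸ heisSub q ℓ) := Encodable.ofCountable _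
  have heq : dist z w = dist (Encodable.encode z) (Encodable.encode w) := rfl
  rw [heq]
  exact Nat.pairwise_one_le_dist fun he => h (Encodable.encode_injective he)

/-- If two points are at distance `< (1/2)^L`, they agree at level `L`. -/
theorem xinfH_coord_eq_of_dist_lt {x y : XinfH q} {L : ℕ}
    (h : dist x y < (1/2 : ℝ) ^ L) : x.1 L = y.1 L := by
  by_contra hne
  have h1 : (1:ℝ) ≤ dist (x.1 L) (y.1 L) := one_le_dist_quot hne
  have h2 : min ((1/2 : ℝ) ^ L) (dist (x.1 L) (y.1 L)) ≤ dist x y := by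
    rw [xinfH_dist_eq]
    exact Summable.le_tsum (xinfH_summable x y) L fun j _ => le_min (by positivity) dist_nonneg
  have h3 : ((1/2 : ℝ) ^ L) ≤ 1 := by
    apply pow_le_one₀ <;> norm_num
  rw [min_eq_left (le_trans h3 h1)] at h2
  exact absurd (lt_of_le_of_lt h2 h) (lt_irrefl _)

/-! ### Cylinders -/

/-- The cylinder of points whose level-`L` coordinate is the identity coset. -/
def cyl (q : ℕ → ℕ) (L : ℕ) : Set (XinfH q) :=
  {x | x.1 L = QuotientGroup.mk 1}

theorem mem_cyl {L : ℕ} {x : XinfH q} : x ∈ cyl q L ↔ x.1 L = QuotientGroup.mk 1 :=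
  Iff.rfl

theorem isOpen_cyl (q : ℕ → ℕ) (L : ℕ) : IsOpen (cyl q L) := by
  have hc : Continuous (fun x : XinfH q => x.1 L) :=
    (continuous_apply L).comp continuous_subtype_val
  exact (isOpen_discrete {(QuotientGroup.mk 1 : Heisenberg ⧸ heisSub q L)}).preimage hc

theorem heisPt_one_mem_cyl (q : ℕ → ℕ) (L : ℕ) : heisPt q 1 ∈ cyl q L := rfl

theorem cyl_nonempty (q : ℕ → ℕ) (L : ℕ) : (cyl q L).Nonempty :=
  ⟨heisPt q 1, heisPt_one_mem_cyl q L⟩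

theorem cyl_subset {L L' : ℕ} (h : L ≤ L') : cyl q L' ⊆ cyl q L := by
  intro x hx
  exact coord_of_le x h 1 hx

theorem cyl_diam_le (q : ℕ → ℕ) (L : ℕ) : Metric.diam (cyl q L) ≤ (1/2 : ℝ) ^ L := by
  refine Metric.diam_le_of_forall_dist_le (by positivity) fun x hx y hy => ?_
  exact xinfH_dist_le (by rw [mem_cyl.mp hx, mem_cyl.mp hy])

theorem mem_cyl_rep {L : ℕ} {x : XinfH q} (hx : x ∈ cyl q L) {ℓ : ℕ}
    {k : Heisenberg} (hk : x.1 ℓ = QuotientGroup.mk k) (hℓ : L ≤ ℓ) :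
    k ∈ heisSub q L := by
  have h1 : x.1 L = QuotientGroup.mk k := coord_of_le x hℓ k hk
  have h2 : (QuotientGroup.mk k : Heisenberg ⧸ heisSub q L) = QuotientGroup.mk 1 := by
    rw [← h1]; exact hx
  have := (QuotientGroup.eq).mp h2.symm
  simpa using this

end HeisenbergChain

namespace HeisenbergChain

variable {q : ℕ → ℕ}

/-! ### Translation homeomorphisms of `XinfH` from coherent sequences -/

/-- If `N_ℓ ∣ β - γ`, the translations by `(β,0,0)` and `(γ,0,0)` agree on `H ⧸ H_ℓ`. -/
theorem trans_smul_eq {β γ : ℤ} {ℓ : ℕ} (h : heisN q ℓ ∣ β - γ)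
    (z : Heisenberg ⧸ heisSub q ℓ) :
    (⟨β, 0, 0⟩ : Heisenberg) • z = (⟨γ, 0, 0⟩ : Heisenberg) • z := by
  refine QuotientGroup.induction_on z fun k => ?_
  show QuotientGroup.mk ((⟨β,0,0⟩ : Heisenberg) * k)
      = QuotientGroup.mk ((⟨γ,0,0⟩ : Heisenberg) * k)
  rw [QuotientGroup.eq]
  refine ⟨?_, ?_, ?_⟩
  · show heisM q ℓ ∣ (((⟨β,0,0⟩ : Heisenberg) * k)⁻¹ * ((⟨γ,0,0⟩ : Heisenberg) * k)).a
    have : (((⟨β,0,0⟩ : Heisenberg) * k)⁻¹ * ((⟨γ,0,0⟩ : Heisenberg) * k)).a = γ - β := by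
      simp [Heisenberg.mul_a, Heisenberg.inv_a]; ring
    rw [this]
    exact (heisM_dvd_heisN q ℓ).trans ((dvd_sub_comm).mp h)
  · show heisN q ℓ ∣ (((⟨β,0,0⟩ : Heisenberg) * k)⁻¹ * ((⟨γ,0,0⟩ : Heisenberg) * k)).b
    have : (((⟨β,0,0⟩ : Heisenberg) * k)⁻¹ * ((⟨γ,0,0⟩ : Heisenberg) * k)).b = 0 := by
      simp [Heisenberg.mul_b, Heisenberg.inv_b]
    rw [this]
    exact dvd_zero _
  · show heisN q ℓ ∣ (((⟨β,0,0⟩ : Heisenberg) * k)⁻¹ * ((⟨γ,0,0⟩ : Heisenberg) * k)).c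
    have : (((⟨β,0,0⟩ : Heisenberg) * k)⁻¹ * ((⟨γ,0,0⟩ : Heisenberg) * k)).c
        = (γ - β) * k.b := by
      simp [Heisenberg.mul_a, Heisenberg.mul_b, Heisenberg.mul_c, Heisenberg.inv_a,
        Heisenberg.inv_b, Heisenberg.inv_c]
      ring
    rw [this]
    exact Dvd.dvd.mul_right ((dvd_sub_comm).mp h) _

theorem heis_trans_mul (β : ℤ) :
    (⟨-β, 0, 0⟩ : Heisenberg) * (⟨β, 0, 0⟩ : Heisenberg) = 1 := by
  ext <;> simp

/-- The homeomorphism of `XinfH` given by level-wise translation by `(α ℓ, 0, 0)`. -/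
def alphaHomeo (q : ℕ → ℕ) (α : ℕ → ℤ) (hα : ∀ ℓ, heisN q ℓ ∣ α (ℓ+1) - α ℓ) :
    XinfH q ≃ₜ XinfH q where
  toFun x := ⟨fun ℓ => (⟨α ℓ, 0, 0⟩ : Heisenberg) • x.1 ℓ, fun ℓ => by
    rw [heisBond_smul, x.2 ℓ]
    exact trans_smul_eq (hα ℓ) _⟩
  invFun x := ⟨fun ℓ => (⟨-α ℓ, 0, 0⟩ : Heisenberg) • x.1 ℓ, fun ℓ => by
    rw [heisBond_smul, x.2 ℓ]
    refine trans_smul_eq ?_ _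
    rw [neg_sub_neg]
    exact (dvd_sub_comm).mp (hα ℓ)⟩
  left_inv x := Subtype.ext (funext fun ℓ => by
    show (⟨-α ℓ, 0, 0⟩ : Heisenberg) • (⟨α ℓ, 0, 0⟩ : Heisenberg) • x.1 ℓ = x.1 ℓ
    rw [← mul_smul, heis_trans_mul, one_smul])
  right_inv x := Subtype.ext (funext fun ℓ => by
    show (⟨α ℓ, 0, 0⟩ : Heisenberg) • (⟨-α ℓ, 0, 0⟩ : Heisenberg) • x.1 ℓ = x.1 ℓ
    have h1 : (⟨α ℓ, 0, 0⟩ : Heisenberg) * (⟨-α ℓ, 0, 0⟩ : Heisenberg) = 1 := by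
      ext <;> simp
    rw [← mul_smul, h1, one_smul])
  continuous_toFun := by
    refine Continuous.subtype_mk (continuous_pi fun ℓ => ?_) _
    exact (continuous_of_discreteTopology
        (f := fun z : Heisenberg ⧸ heisSub q ℓ => (⟨α ℓ, 0, 0⟩ : Heisenberg) • z)).comp
      ((continuous_apply ℓ).comp continuous_subtype_val)
  continuous_invFun := by
    refine Continuous.subtype_mk (continuous_pi fun ℓ => ?_) _
    exact (continuous_of_discreteTopology
        (f := fun z : Heisenberg ⧸ heisSub q ℓ => (⟨-α ℓ, 0, 0⟩ : Heisenberg) • z)).comp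
      ((continuous_apply ℓ).comp continuous_subtype_val)

theorem alphaHomeo_coord (q : ℕ → ℕ) (α : ℕ → ℤ) (hα) (x : XinfH q) (ℓ : ℕ) :
    ((alphaHomeo q α hα) x).1 ℓ = (⟨α ℓ, 0, 0⟩ : Heisenberg) • x.1 ℓ := rfl

/-! ### The coherent sequence `α` used for wildness -/

/-- `P_{s,ℓ} = q_{s+1}² ⋯ q_ℓ²`. -/
def heisP (q : ℕ → ℕ) (s ℓ : ℕ) : ℤ := ∏ i ∈ Finset.Ico (s+1) (ℓ+1), (q i : ℤ) ^ 2

theorem heisP_self (q : ℕ → ℕ) (s : ℕ) : heisP q s s = 1 := by simp [heisP]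

theorem heisN_factor {s ℓ : ℕ} (h : s ≤ ℓ) :
    heisN q ℓ = heisN q s * heisP q s ℓ := by
  rw [heisN, heisN, heisP, Finset.range_eq_Ico,
    ← Finset.prod_Ico_consecutive (fun i => ((q i : ℤ))^2) (Nat.zero_le (s+1)) (by omega : s+1 ≤ ℓ+1),
    Finset.range_eq_Ico]

theorem heisP_succ {s ℓ : ℕ} (h : s ≤ ℓ) :
    heisP q s (ℓ+1) = heisP q s ℓ * (q (ℓ+1) : ℤ) ^ 2 := by
  rw [heisP, heisP, Finset.prod_Ico_succ_top (by omega)]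

theorem heisM_dvd_M_mul_P {s ℓ : ℕ} (h : s ≤ ℓ) :
    heisM q ℓ ∣ heisM q s * heisP q s ℓ := by
  have h1 : heisM q ℓ = heisM q s * ∏ i ∈ Finset.Ico (s+1) (ℓ+1), (q i : ℤ) := by
    rw [heisM, heisM, Finset.range_eq_Ico,
      ← Finset.prod_Ico_consecutive (fun i => ((q i : ℤ))) (Nat.zero_le (s+1)) (by omega : s+1 ≤ ℓ+1),
        Finset.range_eq_Ico]
  rw [h1, heisP]
  exact mul_dvd_mul_left _ (Finset.prod_dvd_prod_of_dvd _ _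
    fun i _ => dvd_pow_self ((q i : ℤ)) two_ne_zero)

theorem heisCoprime (hq : ∀ i, Nat.Prime (q i)) (hinj : Function.Injective q)
    {s ℓ : ℕ} (h : s < ℓ) : IsCoprime (heisM q s) ((q ℓ : ℤ) ^ 2) := by
  have hnat : Nat.Coprime (∏ i ∈ Finset.range (s+1), q i) (q ℓ ^ 2) := by
    refine Nat.Coprime.pow_right 2 (Nat.Coprime.prod_left fun i hi => ?_)
    refine (Nat.coprime_primes (hq i) (hq ℓ)).mpr fun he => ?_
    have := hinj he
    simp only [Finset.mem_range] at hi
    omega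
  have hc := Nat.Coprime.isCoprime hnat
  rw [heisM_eq_natCast]
  have hcast : ((q ℓ : ℤ))^2 = ((q ℓ ^ 2 : ℕ) : ℤ) := by push_cast; ring
  rw [hcast]
  exact hc

theorem heisAlpha_step (hq : ∀ i, Nat.Prime (q i)) (hinj : Function.Injective q)
    {s ℓ : ℕ} (h : s ≤ ℓ) (x : ℤ) (hx : heisM q s * heisP q s ℓ ∣ x) :
    ∃ t : ℤ, heisM q s * heisP q s (ℓ+1) ∣ x + heisN q ℓ * t := by
  obtain ⟨c, rfl⟩ := hx
  obtain ⟨u, v, huv⟩ := heisCoprime hq hinj (show s < ℓ + 1 by omega)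
  refine ⟨-(c * u), ?_⟩
  have hN : heisN q ℓ = heisM q s * (heisM q s * heisP q s ℓ) := by
    rw [heisN_factor h, heisN_eq_sq]
    have : heisN q s = heisM q s ^ 2 := heisN_eq_sq q s
    rw [heisN_eq_sq] at *
    nlinarith [heisN_eq_sq q s]
  have h1 : heisM q s * heisP q s ℓ * c + heisN q ℓ * (-(c * u))
      = (heisM q s * heisP q s (ℓ+1)) * (c * v) := by
    rw [hN, heisP_succ h]
    linear_combination (-(heisM q s * heisP q s ℓ * c)) * huv
  rw [h1]
  exact Dvd.intro _ rfl

theorem exists_heisAlpha (hq : ∀ i, Nat.Prime (q i)) (hinj : Function.Injective q)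
    (s : ℕ) :
    ∃ α : ℕ → ℤ, (∀ ℓ, ℓ ≤ s → α ℓ = heisM q s) ∧
      (∀ ℓ, heisN q ℓ ∣ α (ℓ+1) - α ℓ) ∧
      (∀ ℓ, s ≤ ℓ → heisM q s * heisP q s ℓ ∣ α ℓ) := by
  have total : ∀ ℓ (x : ℤ), ∃ y : ℤ, heisN q ℓ ∣ y - x ∧
      (s ≤ ℓ → heisM q s * heisP q s ℓ ∣ x → heisM q s * heisP q s (ℓ+1) ∣ y) := by
    intro ℓ x
    by_cases hc : s ≤ ℓ ∧ heisM q s * heisP q s ℓ ∣ x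
    · obtain ⟨t, ht⟩ := heisAlpha_step hq hinj hc.1 x hc.2
      exact ⟨x + heisN q ℓ * t, ⟨t, by ring⟩, fun _ _ => ht⟩
    · exact ⟨x, ⟨0, by ring⟩, fun h1 h2 => absurd ⟨h1, h2⟩ hc⟩
  choose f hf1 hf2 using total
  let α : ℕ → ℤ := fun n =>
    Nat.rec (heisM q s) (fun ℓ ih => if ℓ + 1 ≤ s then heisM q s else f ℓ ih) n
  have hzero : α 0 = heisM q s := rfl
  have hsucc : ∀ n, α (n+1) = if n + 1 ≤ s then heisM q s else f n (α n) := fun n => rfl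
  have hle : ∀ ℓ, ℓ ≤ s → α ℓ = heisM q s := by
    intro ℓ hℓ
    cases ℓ with
    | zero => exact hzero
    | succ n => rw [hsucc n, if_pos hℓ]
  have hinv : ∀ ℓ, s ≤ ℓ → heisM q s * heisP q s ℓ ∣ α ℓ := by
    intro ℓ
    induction ℓ with
    | zero =>
      intro h0
      have hs0 : s = 0 := Nat.le_zero.mp h0
      rw [hzero, hs0, heisP_self]
      exact ⟨1, by ring⟩
    | succ n ih =>
      intro hs
      rw [hsucc n]
      by_cases hns : n + 1 ≤ s
      · rw [if_pos hns]
        have hseq : s = n + 1 := by omega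
        rw [hseq, heisP_self]
        exact ⟨1, by ring⟩
      · rw [if_neg hns]
        have hsn : s ≤ n := by omega
        exact hf2 n (α n) hsn (ih hsn)
  have hdiff : ∀ ℓ, heisN q ℓ ∣ α (ℓ+1) - α ℓ := by
    intro ℓ
    rw [hsucc ℓ]
    by_cases hns : ℓ + 1 ≤ s
    · rw [if_pos hns, hle ℓ (by omega)]
      simp
    · rw [if_neg hns]
      exact hf1 ℓ (α ℓ)
  exact ⟨α, hle, hdiff, hinv⟩

theorem not_heisM_succ_dvd (hq : ∀ i, Nat.Prime (q i)) (L : ℕ) :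
    ¬ heisM q (L+1) ∣ heisM q L := by
  intro hdvd
  have h1 : heisM q (L+1) = heisM q L * (q (L+1) : ℤ) := by
    rw [heisM, heisM, Finset.prod_range_succ]
  have hM : heisM q L ≠ 0 := heisM_ne_zero (fun i => (hq i).pos.ne') L
  rw [h1] at hdvd
  have h2' : heisM q L * (q (L+1) : ℤ) ∣ heisM q L * 1 := by
    rw [mul_one]; exact hdvd
  have h2 : (q (L+1) : ℤ) ∣ 1 := (mul_dvd_mul_iff_left hM).mp h2'
  have h3 := Int.le_of_dvd one_pos h2
  have := (hq (L+1)).two_le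
  omega

theorem not_heisM_dvd_heisN (hq : ∀ i, Nat.Prime (q i)) (hinj : Function.Injective q)
    {L s : ℕ} (h : L < s) : ¬ heisM q s ∣ heisN q L := by
  intro hdvd
  have hq' : ((q s : ℤ)) ∣ heisM q s :=
    Finset.dvd_prod_of_mem _ (Finset.self_mem_range_succ s)
  have h1 : ((q s : ℕ)) ∣ (∏ i ∈ Finset.range (L+1), q i ^ 2) := by
    have h2 : ((q s : ℤ)) ∣ ((∏ i ∈ Finset.range (L+1), q i ^ 2 : ℕ) : ℤ) := by
      refine hq'.trans (hdvd.trans ?_)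
      rw [heisN]
      push_cast
      exact dvd_refl _
    exact_mod_cast h2
  obtain ⟨i, hi, hdvd2⟩ := ((hq s).prime.dvd_finset_prod_iff _).mp h1
  have h3 : q s ∣ q i := (hq s).dvd_of_dvd_pow hdvd2
  have h4 : q s = q i := ((Nat.prime_dvd_prime_iff_eq (hq s) (hq i)).mp h3)
  have := hinj h4
  simp only [Finset.mem_range] at hi
  omega

end HeisenbergChain

namespace HeisenbergChain

variable {q : ℕ → ℕ}

theorem conj_inv_trans (β : ℤ) (k : Heisenberg) :
    ((⟨β, 0, 0⟩ : Heisenberg) * k)⁻¹ * k = ⟨-β, 0, -(β * k.b)⟩ := by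
  ext
  · simp [Heisenberg.mul_a, Heisenberg.inv_a]
  · simp [Heisenberg.mul_b, Heisenberg.inv_b]
  · simp [Heisenberg.mul_a, Heisenberg.mul_b, Heisenberg.mul_c, Heisenberg.inv_a,
      Heisenberg.inv_b, Heisenberg.inv_c]
    ring

theorem alpha_fixes {α : ℕ → ℤ} {s : ℕ}
    (hαdiff : ∀ ℓ, heisN q ℓ ∣ α (ℓ+1) - α ℓ)
    (hle : ∀ ℓ, ℓ ≤ s → α ℓ = heisM q s)
    (hinv : ∀ ℓ, s ≤ ℓ → heisM q s * heisP q s ℓ ∣ α ℓ)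
    {x : XinfH q} (hx : x ∈ cyl q s) :
    alphaHomeo q α hαdiff x = x := by
  apply Subtype.ext; funext ℓ
  obtain ⟨k, hk⟩ := QuotientGroup.mk_surjective (x.1 ℓ)
  rw [alphaHomeo_coord, ← hk]
  show QuotientGroup.mk ((⟨α ℓ, 0, 0⟩ : Heisenberg) * k) = QuotientGroup.mk k
  rw [QuotientGroup.eq, conj_inv_trans]
  rcases le_total ℓ s with hℓ | hℓ
  · have hkmem : k ∈ heisSub q ℓ := mem_cyl_rep (cyl_subset hℓ hx) hk.symm le_rfl
    refine ⟨dvd_neg.mpr ?_, dvd_zero _, dvd_neg.mpr ?_⟩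
    · rw [hle ℓ hℓ]
      exact heisM_dvd_of_le q hℓ
    · exact Dvd.dvd.mul_left hkmem.2.1 (α ℓ)
  · have hkmem : k ∈ heisSub q s := mem_cyl_rep hx hk.symm hℓ
    obtain ⟨c, hc⟩ := hinv ℓ hℓ
    refine ⟨dvd_neg.mpr ((heisM_dvd_M_mul_P hℓ).trans (hinv ℓ hℓ)), dvd_zero _,
      dvd_neg.mpr ?_⟩
    obtain ⟨b', hb'⟩ := hkmem.2.1
    refine ⟨heisM q s * c * b', ?_⟩
    rw [hc, hb', heisN_factor hℓ, heisN_eq_sq q s]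
    ring

theorem alpha_moves (hq : ∀ i, Nat.Prime (q i)) (hinj : Function.Injective q)
    {α : ℕ → ℤ} {s L₀ : ℕ} (hαdiff : ∀ ℓ, heisN q ℓ ∣ α (ℓ+1) - α ℓ)
    (hs : s = L₀ + 1) (hle : ∀ ℓ, ℓ ≤ s → α ℓ = heisM q s) :
    alphaHomeo q α hαdiff (heisPt q ⟨0, heisN q L₀, 0⟩)
      ≠ heisPt q ⟨0, heisN q L₀, 0⟩ := by
  intro heq
  have h1 := congrArg (fun z : XinfH q => z.1 s) heq
  simp only [alphaHomeo_coord, heisPt_coord] at h1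
  have h2 : (QuotientGroup.mk ((⟨α s, 0, 0⟩ : Heisenberg) * ⟨0, heisN q L₀, 0⟩) :
      Heisenberg ⧸ heisSub q s) = QuotientGroup.mk ⟨0, heisN q L₀, 0⟩ := h1
  rw [QuotientGroup.eq, conj_inv_trans] at h2
  obtain ⟨-, -, hcdvd⟩ := h2
  rw [hle s le_rfl] at hcdvd
  have h3 : heisN q s ∣ heisM q s * heisN q L₀ := dvd_neg.mp hcdvd
  have h4 : heisM q s ∣ heisN q L₀ := by
    have hM : heisM q s ≠ 0 := heisM_ne_zero (fun i => (hq i).pos.ne') s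
    rw [heisN_eq_sq q s, sq] at h3
    exact (mul_dvd_mul_iff_left hM).mp h3
  exact not_heisM_dvd_heisN hq hinj (by omega) h4

theorem heisPt_mem_cyl {L : ℕ} {k : Heisenberg} (hk : k ∈ heisSub q L) :
    heisPt q k ∈ cyl q L := by
  rw [mem_cyl, heisPt_coord]
  rw [QuotientGroup.eq]
  simpa using inv_mem hk

end HeisenbergChain
/-- For an infinite sequence of distinct primes `q`, the chain of
subgroups `H_ℓ = {(a M_ℓ, b N_ℓ, c N_ℓ)}` of the integer Heisenberg group is a strictly
nested chain of finite-index subgroups with trivial intersection, the normal core of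
`H_ℓ` is `C_ℓ = {(a N_ℓ, b N_ℓ, c N_ℓ)}`, and the natural left action of the Heisenberg
group on the inverse limit `X_∞ = lim← H/H_ℓ` is a minimal equicontinuous Cantor action
which is topologically free and wild. -/
theorem heisenberg_chain_action_topFree_wild (q : ℕ → ℕ)
    (hq : ∀ i, Nat.Prime (q i)) (hinj : Function.Injective q) :
    (∀ ℓ, (heisSub q ℓ).FiniteIndex) ∧
    (∀ ℓ, heisSub q (ℓ + 1) ≤ heisSub q ℓ) ∧
    (⨅ ℓ, heisSub q ℓ) = ⊥ ∧
    (∀ ℓ, (heisSub q ℓ).normalCore = heisCore q ℓ) ∧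
    (Nonempty (XinfH q) ∧ TotallyDisconnectedSpace (XinfH q) ∧
      Perfect (Set.univ : Set (XinfH q))) ∧
    IsMinimalAction (heisAct q) ∧ IsEquicontinuousAction (heisAct q) ∧
    IsTopologicallyFree (heisAct q) ∧
    (letI : CompactSpace (XinfH q) := xinfH_compactSpace q fun i => (hq i).pos.ne'
     ¬ IsStableAction (heisAct q)) := by
  classical
  have hq0 : ∀ i, q i ≠ 0 := fun i => (hq i).pos.ne'
  have hhalf : (1:ℝ)/2 < 1 := by norm_num
  open HeisenbergChain in
  refine ⟨?_, heisSub_antitone q, ?_, fun ℓ => HeisenbergChain.normalCore_heisSub q ℓ,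
    ⟨⟨HeisenbergChain.heisPt q 1⟩, ?_, ?_⟩, ?_, ?_, ?_, ?_⟩
  · -- finite index
    intro ℓ
    haveI := heisQuot_finite hq0 ℓ
    exact @Subgroup.finiteIndex_of_finite_quotient _ _ (heisSub q ℓ) (heisQuot_finite hq0 ℓ)
  · -- trivial intersection
    rw [eq_bot_iff]
    intro g hg
    simp only [Subgroup.mem_iInf] at hg
    rw [Subgroup.mem_bot]
    exact HeisenbergChain.heis_eq_one_of_forall_mem hq hg
  · -- totally disconnected
    refine ⟨fun t _ ht => ?_⟩
    intro x hx y hy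
    apply Subtype.ext; funext ℓ
    have hc : Continuous (fun z : XinfH q => z.1 ℓ) :=
      (continuous_apply ℓ).comp continuous_subtype_val
    have himg : IsPreconnected ((fun z : XinfH q => z.1 ℓ) '' t) :=
      ht.image _ hc.continuousOn
    exact himg.subsingleton (Set.mem_image_of_mem _ hx) (Set.mem_image_of_mem _ hy)
  · -- perfect
    refine ⟨isClosed_univ, ?_⟩
    rw [preperfect_iff_nhds]
    intro x _ U hU
    obtain ⟨r, hr, hball⟩ := Metric.mem_nhds_iff.mp hU
    obtain ⟨L, hL⟩ := exists_pow_lt_of_lt_one hr hhalf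
    obtain ⟨g, hg⟩ := QuotientGroup.mk_surjective (x.1 (L+1))
    have hwL : (⟨heisM q L, 0, 0⟩ : Heisenberg) ∈ heisSub q L :=
      ⟨dvd_refl _, dvd_zero _, dvd_zero _⟩
    set y := HeisenbergChain.heisPt q (g * ⟨heisM q L, 0, 0⟩) with hy
    have hyL : y.1 L = x.1 L := by
      rw [HeisenbergChain.heisPt_coord,
        HeisenbergChain.coord_of_le x (Nat.le_succ L) g hg.symm]
      rw [QuotientGroup.eq]
      simpa using inv_mem hwL
    refine ⟨y, ⟨hball ?_, trivial⟩, ?_⟩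
    · rw [Metric.mem_ball]
      exact lt_of_le_of_lt (HeisenbergChain.xinfH_dist_le hyL) hL
    · intro heq
      have h1 : y.1 (L+1) = x.1 (L+1) := by rw [heq]
      rw [HeisenbergChain.heisPt_coord, ← hg, QuotientGroup.eq] at h1
      obtain ⟨hdvd, -, -⟩ := h1
      have h2 : ((g * (⟨heisM q L, 0, 0⟩ : Heisenberg))⁻¹ * g).a = -(heisM q L) := by
        simp [Heisenberg.mul_a, Heisenberg.inv_a]
      rw [h2, dvd_neg] at hdvd
      exact HeisenbergChain.not_heisM_succ_dvd hq L hdvd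
  · -- minimal
    intro x
    have : DenseRange (fun g : Heisenberg => heisAct q g x) := by
      rw [Metric.denseRange_iff]
      intro z r hr
      obtain ⟨L, hL⟩ := exists_pow_lt_of_lt_one hr hhalf
      obtain ⟨k, hk⟩ := QuotientGroup.mk_surjective (z.1 L)
      obtain ⟨h, hh⟩ := QuotientGroup.mk_surjective (x.1 L)
      refine ⟨k * h⁻¹, lt_of_le_of_lt ?_ hL⟩
      have h1 : ((heisAct q (k * h⁻¹)) x).1 L = QuotientGroup.mk k := by
        rw [HeisenbergChain.heisAct_coord, ← hh]
        show QuotientGroup.mk ((k * h⁻¹) * h) = QuotientGroup.mk k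
        rw [inv_mul_cancel_right]
      exact HeisenbergChain.xinfH_dist_le (by rw [h1, hk])
    exact this
  · -- equicontinuous
    intro ε hε
    obtain ⟨L, hL⟩ := exists_pow_lt_of_lt_one hε hhalf
    refine ⟨(1/2)^L, by positivity, ?_⟩
    intro x y hxy g
    have h1 : x.1 L = y.1 L := HeisenbergChain.xinfH_coord_eq_of_dist_lt hxy
    have h2 : ((heisAct q g) x).1 L = ((heisAct q g) y).1 L := by
      rw [HeisenbergChain.heisAct_coord, HeisenbergChain.heisAct_coord, h1]
    exact lt_of_le_of_lt (HeisenbergChain.xinfH_dist_le h2) hL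
  · -- topologically free
    have hfix : ∀ g : Heisenberg, g ≠ 1 →
        IsNowhereDense {x : XinfH q | heisAct q g x = x} := by
      intro g hg
      have hcl : IsClosed {x : XinfH q | heisAct q g x = x} :=
        isClosed_eq (heisAct q g).continuous continuous_id
      rw [hcl.isNowhereDense_iff, Set.eq_empty_iff_forall_notMem]
      intro x hx
      obtain ⟨r, hr, hball⟩ := Metric.isOpen_iff.mp isOpen_interior x hx
      obtain ⟨L, hL⟩ := exists_pow_lt_of_lt_one hr hhalf
      obtain ⟨h, hh⟩ := QuotientGroup.mk_surjective (x.1 L)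
      have hyball : HeisenbergChain.heisPt q h ∈ Metric.ball x r := by
        rw [Metric.mem_ball, dist_comm]
        refine lt_of_le_of_lt (HeisenbergChain.xinfH_dist_le (L := L) ?_) hL
        rw [HeisenbergChain.heisPt_coord, hh]
      have hmem' : HeisenbergChain.heisPt q h ∈ {x : XinfH q | heisAct q g x = x} :=
        interior_subset (hball hyball)
      have hmem : heisAct q g (HeisenbergChain.heisPt q h)
          = HeisenbergChain.heisPt q h := hmem'
      have key : ∀ ℓ : ℕ, h⁻¹ * (g * h) ∈ heisSub q ℓ := by
        intro ℓ
        have h1 := congrArg (fun z : XinfH q => z.1 ℓ) hmem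
        have h2 : (QuotientGroup.mk (g * h) : Heisenberg ⧸ heisSub q ℓ)
            = QuotientGroup.mk h := h1
        exact (QuotientGroup.eq).mp h2.symm
      have h3 : h⁻¹ * (g * h) = 1 := HeisenbergChain.heis_eq_one_of_forall_mem hq key
      apply hg
      calc g = h * (h⁻¹ * (g * h)) * h⁻¹ := by group
        _ = 1 := by rw [h3]; group
    apply (isMeagre_iff_countable_union_isNowhereDense).mpr
    refine ⟨(fun g : Heisenberg => {x : XinfH q | heisAct q g x = x}) '' {g | g ≠ 1},
      ?_, ?_, ?_⟩
    · rintro t ⟨g, hg, rfl⟩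
      exact hfix g hg
    · exact (Set.to_countable _).image _
    · rintro x ⟨g, hg, hx⟩
      exact ⟨_, Set.mem_image_of_mem _ hg, hx⟩
  · -- wild
    letI : CompactSpace (XinfH q) := xinfH_compactSpace q fun i => (hq i).pos.ne'
    intro hstable
    obtain ⟨ε, hε, hLQA⟩ := hstable
    obtain ⟨L₀, hL₀⟩ := exists_pow_lt_of_lt_one hε hhalf
    set s := L₀ + 1 with hs
    obtain ⟨α, hαle, hαdiff, hαinv⟩ := HeisenbergChain.exists_heisAlpha hq hinj s
    set ghat := HeisenbergChain.alphaHomeo q α hαdiff with hghat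
    have hmem : ghat ∈ profiniteClosure (heisAct q) := by
      have hcl : ghat ∈ closure ((heisAct q).range : Set (XinfH q ≃ₜ XinfH q)) := by
        rw [Metric.mem_closure_iff]
        intro δ hδ
        obtain ⟨L, hL⟩ := exists_pow_lt_of_lt_one hδ hhalf
        refine ⟨heisAct q ⟨α L, 0, 0⟩, ⟨⟨α L, 0, 0⟩, rfl⟩, ?_⟩
        rw [Homeomorph.dist_lt_iff' _ _ hδ]
        intro x
        refine lt_of_le_of_lt (HeisenbergChain.xinfH_dist_le (L := L) ?_) hL
        rw [HeisenbergChain.alphaHomeo_coord, HeisenbergChain.heisAct_coord]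
      exact hcl
    set g' : profiniteClosure (heisAct q) := ⟨ghat, hmem⟩ with hg'
    have happ : ∀ x : XinfH q, (profiniteClosure (heisAct q)).subtype g' x = ghat x :=
      fun x => rfl
    have hUdiam : Metric.diam (HeisenbergChain.cyl q L₀) < ε :=
      lt_of_le_of_lt (HeisenbergChain.cyl_diam_le q L₀) hL₀
    have hVfix : ∀ x ∈ HeisenbergChain.cyl q s,
        (profiniteClosure (heisAct q)).subtype g' x = x := by
      intro x hx
      rw [happ]
      exact HeisenbergChain.alpha_fixes hαdiff hαle hαinv hx
    have hVim : (profiniteClosure (heisAct q)).subtype g' ''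
        HeisenbergChain.cyl q s = HeisenbergChain.cyl q s := by
      rw [Set.image_congr hVfix]
      exact Set.image_id _
    have hcontr := hLQA (HeisenbergChain.cyl q L₀) (HeisenbergChain.isOpen_cyl q L₀)
      (HeisenbergChain.cyl_nonempty q L₀) hUdiam (HeisenbergChain.cyl q s)
      (HeisenbergChain.cyl_subset (by omega)) (HeisenbergChain.isOpen_cyl q s)
      (HeisenbergChain.cyl_nonempty q s) g' hVim hVfix
    have hymem : HeisenbergChain.heisPt q ⟨0, heisN q L₀, 0⟩
        ∈ HeisenbergChain.cyl q L₀ :=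
      HeisenbergChain.heisPt_mem_cyl ⟨dvd_zero _, dvd_refl _, dvd_zero _⟩
    have := hcontr _ hymem
    rw [happ] at this
    exact HeisenbergChain.alpha_moves hq hinj hαdiff hs hαle this
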